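/- Let α ≥ 1 be an integer and let f : [0,1] → ℝ be α-times continuously differentiable with f^{(l)}(0) = f^{(l)}(1) = 0 for every odd integer l < α. Let θ_k := ∫₀¹ f(x)·cos(kπx) dx for k ≥ 1. Then ∫₀¹ (f^{(α)}(x))² dx = 2·π^{2α} · Σ_{k=1}^∞ k^{2α}·θ_k². Consequently, for any C > 0, ∫₀¹ (f^{(α)}(x))² dx ≤ 2π^{2α}·C holds if and only if Σ_{k=1}^∞ k^{2α}·θ_k² ≤ C. -/

import Mathlib

open MeasureTheory Real Set intervalIntegral Complex AddCircle
open scoped NNReal ENNReal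

lemma parseval_core (G : ℝ → ℂ) (hme : Measurable G) (M : ℝ)
    (hb : ∀ x ∈ Set.Ioc (-1:ℝ) 1, ‖G x‖ ≤ M) :
    HasSum (fun n : ℤ =>
        ‖(1/2 : ℂ) * ∫ x in (-1:ℝ)..1,
            Complex.exp (2 * Real.pi * Complex.I * (-n) * x / 2) * G x‖^2)
      ((1/2) * ∫ x in (-1:ℝ)..1, ‖G x‖^2) := by
  haveI : Fact (0 < (2:ℝ)) := ⟨two_pos⟩
  have h21 : Set.Ioc (-1:ℝ) (-1+2) = Set.Ioc (-1:ℝ) 1 := by norm_num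
  set H : AddCircle (2:ℝ) → ℂ := AddCircle.liftIoc (2:ℝ) (-1) G with hH
  have hHeq : H = (G ∘ (Subtype.val : Set.Ioc (-1:ℝ) (-1+2) → ℝ)) ∘
      (AddCircle.measurableEquivIoc (2:ℝ) (-1)) := rfl
  have hHme : Measurable H := by
    rw [hHeq]
    exact (hme.comp measurable_subtype_coe).comp
      (AddCircle.measurableEquivIoc (2:ℝ) (-1)).measurable
  have hmemIoc : ∀ t : AddCircle (2:ℝ),
      ((AddCircle.equivIoc (2:ℝ) (-1) t : ℝ)) ∈ Set.Ioc (-1:ℝ) 1 := by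
    intro t
    have h := (AddCircle.equivIoc (2:ℝ) (-1) t).2
    exact ⟨h.1, by linarith [h.2]⟩
  have hHval : ∀ t : AddCircle (2:ℝ), H t = G (AddCircle.equivIoc (2:ℝ) (-1) t) := fun t => rfl
  have hHb : ∀ t : AddCircle (2:ℝ), ‖H t‖ ≤ M := by
    intro t; rw [hHval]; exact hb _ (hmemIoc t)
  have hmem : MemLp H 2 haarAddCircle :=
    MemLp.of_bound hHme.aestronglyMeasurable M (Filter.Eventually.of_forall hHb)
  set HL := hmem.toLp H with hHL
  have hae : (HL : AddCircle (2:ℝ) → ℂ) =ᵐ[haarAddCircle] H := hmem.coeFn_toLp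
  -- Fourier coefficients
  have hcoeff : ∀ n : ℤ, fourierCoeff (HL : AddCircle (2:ℝ) → ℂ) n
      = (1/2 : ℂ) * ∫ x in (-1:ℝ)..1,
          Complex.exp (2 * Real.pi * Complex.I * (-n) * x / 2) * G x := by
    intro n
    have h1 : fourierCoeff (HL : AddCircle (2:ℝ) → ℂ) n = fourierCoeff H n := by
      unfold fourierCoeff
      refine integral_congr_ae ?_
      filter_upwards [hae] with t ht
      simp only [ht]
    rw [h1, fourierCoeff_eq_intervalIntegral H n (-1)]
    have hb1 : (-1:ℝ) + 2 = 1 := by norm_num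
    rw [hb1, Complex.real_smul]
    congr 1
    · norm_num
    refine intervalIntegral.integral_congr_ae ?_
    filter_upwards [] with x
    intro hx
    rw [Set.uIoc_of_le (by norm_num : (-1:ℝ) ≤ 1), ← h21] at hx
    rw [hH, AddCircle.liftIoc_coe_apply hx, fourier_coe_apply, smul_eq_mul]
    push_cast
    ring_nf
  -- Parseval
  have hpars := tsum_sq_fourierCoeff HL
  have hsum : Summable (fun n : ℤ => ‖fourierCoeff (HL : AddCircle (2:ℝ) → ℂ) n‖^2) := by
    have h2 : (0:ℝ) < (2 : ℝ≥0∞).toReal := by norm_num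
    have h3 := (lp.memℓp (fourierBasis.repr HL)).summable h2
    refine h3.congr fun n => ?_
    rw [fourierBasis_repr]
    norm_num
  have hR : (∫ t : AddCircle (2:ℝ), ‖(HL : AddCircle (2:ℝ) → ℂ) t‖^2 ∂haarAddCircle)
      = (1/2) * ∫ x in (-1:ℝ)..1, ‖G x‖^2 := by
    have h1 : (∫ t : AddCircle (2:ℝ), ‖(HL : AddCircle (2:ℝ) → ℂ) t‖^2 ∂haarAddCircle)
        = ∫ t : AddCircle (2:ℝ), ‖H t‖^2 ∂haarAddCircle := by
      refine integral_congr_ae ?_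
      filter_upwards [hae] with t ht
      simp only [ht]
    have h2 := AddCircle.intervalIntegral_preimage (2:ℝ) (-1)
      (fun t : AddCircle (2:ℝ) => ‖H t‖^2)
    have hb1 : (-1:ℝ) + 2 = 1 := by norm_num
    rw [hb1] at h2
    have h3 : (∫ x in (-1:ℝ)..1, ‖H (x:ℝ)‖^2) = ∫ x in (-1:ℝ)..1, ‖G x‖^2 := by
      refine intervalIntegral.integral_congr_ae ?_
      filter_upwards [] with x
      intro hx
      rw [Set.uIoc_of_le (by norm_num : (-1:ℝ) ≤ 1), ← h21] at hx
      rw [hH, AddCircle.liftIoc_coe_apply hx]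
    have h4 : (∫ t : AddCircle (2:ℝ), ‖H t‖^2 ∂(volume : Measure (AddCircle (2:ℝ))))
        = 2 * ∫ t : AddCircle (2:ℝ), ‖H t‖^2 ∂haarAddCircle := by
      rw [AddCircle.volume_eq_smul_haarAddCircle, MeasureTheory.integral_smul_measure _ _,
        ENNReal.toReal_ofReal (by norm_num : (0:ℝ) ≤ 2), smul_eq_mul]
    rw [h1, ← h3, h2, h4]
    ring
  have hfinal : (∑' n : ℤ, ‖fourierCoeff (HL : AddCircle (2:ℝ) → ℂ) n‖^2)
      = (1/2) * ∫ x in (-1:ℝ)..1, ‖G x‖^2 := by rw [hpars, hR]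
  have := hsum.hasSum
  rw [hfinal] at this
  exact this.congr_fun fun n => by rw [hcoeff]

lemma int_split {E : Type*} [NormedAddCommGroup E] [NormedSpace ℝ E] {h : ℝ → E}
    (h1 : IntervalIntegrable h volume (-1) 0) (h2 : IntervalIntegrable h volume 0 1) :
    (∫ x in (-1:ℝ)..1, h x) = (∫ x in (0:ℝ)..1, h x) + ∫ x in (0:ℝ)..1, h (-x) := by
  have e : (∫ x in (0:ℝ)..1, h (-x)) = ∫ x in (-1:ℝ)..0, h x := by
    rw [intervalIntegral.integral_comp_neg]
    norm_num
  rw [e, ← intervalIntegral.integral_add_adjacent_intervals h1 h2, add_comm]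

lemma tsum_int_symm {f : ℤ → ℝ} {S : ℝ} (hf : HasSum f S) (h0 : f 0 = 0)
    (hsymm : ∀ n : ℤ, f (-n) = f n) : S = 2 * ∑' n : ℕ, f ((n:ℤ)+1) := by
  have hs : Summable f := hf.summable
  have h1 : Summable (fun n : ℕ => f n) := hs.comp_injective Nat.cast_injective
  have h1' : Summable (fun n : ℕ => f ((n:ℤ)+1)) := by
    have := (summable_nat_add_iff 1).mpr h1
    refine this.congr fun n => ?_
    push_cast
    ring_nf
  have h2 : Summable (fun n : ℕ => f (-((n:ℤ)+1))) := h1'.congr fun n => (hsymm _).symm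
  have hT := hf.tsum_eq.symm
  rw [tsum_of_nat_of_neg_add_one h1 h2] at hT
  have e2 : (∑' n : ℕ, f (-((n:ℤ)+1))) = ∑' n : ℕ, f ((n:ℤ)+1) :=
    tsum_congr fun n => hsymm _
  rw [e2, h1.tsum_eq_zero_add] at hT
  have e3 : (∑' n : ℕ, f ((n:ℤ)+1)) = ∑' n : ℕ, f ((n+1 : ℕ)) :=
    tsum_congr fun n => by push_cast; ring_nf
  rw [hT, e3]
  have : f ((0:ℕ):ℤ) = 0 := h0
  rw [this]
  ring

lemma parseval_cos (g : ℝ → ℝ) (hg : Continuous g) (h0 : (∫ x in (0:ℝ)..1, g x) = 0) :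
    (∫ x in (0:ℝ)..1, (g x)^2)
      = 2 * ∑' n : ℕ, (∫ x in (0:ℝ)..1, g x * Real.cos (((n:ℝ)+1) * Real.pi * x))^2 := by
  set a : ℤ → ℝ := fun n => ∫ x in (0:ℝ)..1, g x * Real.cos ((n:ℝ) * Real.pi * x) with ha
  set G : ℝ → ℂ := fun x => ((g |x| : ℝ) : ℂ) with hG
  have hgabs : Continuous fun x : ℝ => g |x| := hg.comp continuous_abs
  have hGc : Continuous G := Complex.continuous_ofReal.comp hgabs
  obtain ⟨M, hM⟩ := (isCompact_Icc (a := (-1:ℝ)) (b := 1)).exists_bound_of_continuousOn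
    hgabs.continuousOn
  have hb : ∀ x ∈ Set.Ioc (-1:ℝ) 1, ‖G x‖ ≤ M := by
    intro x hx
    have := hM x (Set.Ioc_subset_Icc_self hx)
    rw [hG, Complex.norm_real]
    exact this
  have hcore := parseval_core G hGc.measurable M hb
  -- compute coefficients
  have hc : ∀ n : ℤ, ((1/2 : ℂ) * ∫ x in (-1:ℝ)..1,
      Complex.exp (2 * Real.pi * Complex.I * (-n) * x / 2) * G x) = ((a n : ℝ) : ℂ) := by
    intro n
    have hpt : ∀ x : ℝ, Complex.exp (2 * Real.pi * Complex.I * (-n) * x / 2) * G x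
        = ((Real.cos ((n:ℝ) * Real.pi * x) * g |x| : ℝ) : ℂ)
          - ((Real.sin ((n:ℝ) * Real.pi * x) * g |x| : ℝ) : ℂ) * Complex.I := by
      intro x
      have harg : 2 * (Real.pi:ℂ) * Complex.I * (-(n:ℂ)) * x / 2
          = ((-((n:ℝ) * Real.pi * x) : ℝ) : ℂ) * Complex.I := by
        push_cast; ring
      rw [hG]
      push_cast
      rw [harg, Complex.exp_mul_I, ← Complex.ofReal_cos, ← Complex.ofReal_sin,
        Real.cos_neg, Real.sin_neg]
      push_cast
      ring
    rw [intervalIntegral.integral_congr (fun x _ => hpt x)]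
    have i1 : IntervalIntegrable (fun x => ((Real.cos ((n:ℝ) * Real.pi * x) * g |x| : ℝ) : ℂ))
        volume (-1) 1 :=
      (Complex.continuous_ofReal.comp (((Real.continuous_cos.comp (by continuity)).mul
        hgabs))).intervalIntegrable _ _
    have i2 : IntervalIntegrable (fun x => ((Real.sin ((n:ℝ) * Real.pi * x) * g |x| : ℝ) : ℂ)
        * Complex.I) volume (-1) 1 :=
      ((Complex.continuous_ofReal.comp (((Real.continuous_sin.comp (by continuity)).mul
        hgabs))).mul continuous_const).intervalIntegrable _ _
    rw [intervalIntegral.integral_sub i1 i2, intervalIntegral.integral_mul_const,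
      intervalIntegral.integral_ofReal, intervalIntegral.integral_ofReal]
    -- B = 0
    have cS1 : IntervalIntegrable (fun x => Real.sin ((n:ℝ) * Real.pi * x) * g |x|)
        volume (-1) 0 := ((Real.continuous_sin.comp (by continuity)).mul
        hgabs).intervalIntegrable _ _
    have cS2 : IntervalIntegrable (fun x => Real.sin ((n:ℝ) * Real.pi * x) * g |x|)
        volume 0 1 := ((Real.continuous_sin.comp (by continuity)).mul
        hgabs).intervalIntegrable _ _
    have hB : (∫ x in (-1:ℝ)..1, Real.sin ((n:ℝ) * Real.pi * x) * g |x|) = 0 := by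
      rw [int_split cS1 cS2]
      simp only [abs_neg, mul_neg, Real.sin_neg, neg_mul]
      rw [intervalIntegral.integral_neg]
      ring
    have cC1 : IntervalIntegrable (fun x => Real.cos ((n:ℝ) * Real.pi * x) * g |x|)
        volume (-1) 0 := ((Real.continuous_cos.comp (by continuity)).mul
        hgabs).intervalIntegrable _ _
    have cC2 : IntervalIntegrable (fun x => Real.cos ((n:ℝ) * Real.pi * x) * g |x|)
        volume 0 1 := ((Real.continuous_cos.comp (by continuity)).mul
        hgabs).intervalIntegrable _ _
    have hhalf : (∫ x in (0:ℝ)..1, Real.cos ((n:ℝ) * Real.pi * x) * g |x|) = a n := by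
      refine intervalIntegral.integral_congr fun x hx => ?_
      rw [Set.uIcc_of_le (by norm_num : (0:ℝ) ≤ 1)] at hx
      rw [_root_.abs_of_nonneg hx.1, mul_comm]
    have hA : (∫ x in (-1:ℝ)..1, Real.cos ((n:ℝ) * Real.pi * x) * g |x|) = 2 * a n := by
      rw [int_split cC1 cC2]
      simp only [abs_neg, mul_neg, Real.cos_neg]
      rw [hhalf]
      ring
    rw [hA, hB]
    push_cast
    ring
  -- compute the L² norm of G
  have hnorm : (∫ x in (-1:ℝ)..1, ‖G x‖^2) = 2 * ∫ x in (0:ℝ)..1, (g x)^2 := by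
    have e1 : ∀ x : ℝ, ‖G x‖^2 = (g |x|)^2 := by
      intro x; rw [hG]; simp [Complex.norm_real, sq_abs]
    rw [intervalIntegral.integral_congr (fun x _ => e1 x)]
    have c1 : IntervalIntegrable (fun x => (g |x|)^2) volume (-1) 0 :=
      ((hgabs).pow 2).intervalIntegrable _ _
    have c2 : IntervalIntegrable (fun x => (g |x|)^2) volume 0 1 :=
      ((hgabs).pow 2).intervalIntegrable _ _
    rw [int_split c1 c2]
    simp only [abs_neg]
    have : (∫ x in (0:ℝ)..1, (g |x|)^2) = ∫ x in (0:ℝ)..1, (g x)^2 := by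
      refine intervalIntegral.integral_congr fun x hx => ?_
      rw [Set.uIcc_of_le (by norm_num : (0:ℝ) ≤ 1)] at hx
      rw [_root_.abs_of_nonneg hx.1]
    rw [this]
    ring
  -- massage hcore
  have hcore' : HasSum (fun n : ℤ => (a n)^2) (∫ x in (0:ℝ)..1, (g x)^2) := by
    have h1 : ∀ n : ℤ, ‖(1/2 : ℂ) * ∫ x in (-1:ℝ)..1,
        Complex.exp (2 * Real.pi * Complex.I * (-n) * x / 2) * G x‖^2 = (a n)^2 := by
      intro n
      rw [hc n]
      simp [Complex.norm_real, sq_abs]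
    have h2 : (1/2 : ℝ) * (∫ x in (-1:ℝ)..1, ‖G x‖^2) = ∫ x in (0:ℝ)..1, (g x)^2 := by
      rw [hnorm]; ring
    rw [← h2]
    exact hcore.congr_fun fun n => (h1 n).symm
  -- symmetry and zero
  have hzero : a 0 = 0 := by
    rw [ha]
    simp only [Int.cast_zero, zero_mul, Real.cos_zero, mul_one]
    exact h0
  have hsymm : ∀ n : ℤ, a (-n) = a n := by
    intro n
    rw [ha]
    refine intervalIntegral.integral_congr fun x hx => ?_
    push_cast
    rw [neg_mul, neg_mul, Real.cos_neg]
  have := tsum_int_symm hcore' (by rw [hzero]; norm_num) (fun n => by rw [hsymm])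
  rw [this]
  congr 1
  refine tsum_congr fun n => ?_
  rw [ha]
  congr 1
  refine intervalIntegral.integral_congr fun x hx => ?_
  push_cast
  ring_nf

lemma parseval_sin (g : ℝ → ℝ) (hg : Continuous g) :
    (∫ x in (0:ℝ)..1, (g x)^2)
      = 2 * ∑' n : ℕ, (∫ x in (0:ℝ)..1, g x * Real.sin (((n:ℝ)+1) * Real.pi * x))^2 := by
  set b : ℤ → ℝ := fun n => ∫ x in (0:ℝ)..1, g x * Real.sin ((n:ℝ) * Real.pi * x) with hb
  set gt : ℝ → ℝ := fun x => if 0 ≤ x then g x else -g (-x) with hgt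
  set G : ℝ → ℂ := fun x => ((gt x : ℝ) : ℂ) with hG
  have hg2 : Continuous fun x : ℝ => -g (-x) := (hg.comp continuous_neg).neg
  have hgtme : Measurable gt :=
    Measurable.ite measurableSet_Ici hg.measurable hg2.measurable
  have hGme : Measurable G := Complex.measurable_ofReal.comp hgtme
  obtain ⟨M, hM⟩ := (isCompact_Icc (a := (-1:ℝ)) (b := 1)).exists_bound_of_continuousOn
    hg.continuousOn
  have hbd : ∀ x ∈ Set.Ioc (-1:ℝ) 1, ‖G x‖ ≤ M := by
    intro x hx
    rw [hG, Complex.norm_real, hgt]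
    by_cases h : 0 ≤ x
    · simp only [if_pos h]
      exact hM x ⟨le_trans (by norm_num) h, hx.2⟩
    · simp only [if_neg h]
      rw [norm_neg]
      exact hM (-x) ⟨by linarith [hx.2], by linarith [hx.1]⟩
  have hcore := parseval_core G hGme M hbd
  -- pointwise values of gt
  have hgtpos : ∀ x : ℝ, 0 ≤ x → gt x = g x := fun x hx => by rw [hgt]; simp [if_pos hx]
  have hgtneg : ∀ x : ℝ, x < 0 → gt x = -g (-x) := fun x hx => by
    rw [hgt]; simp [if_neg (not_le.mpr hx)]
  -- ae x ≠ 0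
  have hne : ∀ᵐ x : ℝ ∂(volume : Measure ℝ), x ≠ 0 := by
    rw [MeasureTheory.ae_iff]
    simp only [not_not, Set.setOf_eq_eq_singleton]
    exact measure_singleton _
  -- integrability helper on the left half
  have keyL : ∀ F : ℝ → ℝ, Continuous F →
      IntervalIntegrable (fun x => F x * gt x) volume (-1) 0 := by
    intro F hF
    refine ((hF.mul hg2).intervalIntegrable _ _).congr_ae ?_
    have h1 : ∀ᵐ x ∂(volume.restrict (Set.uIoc (-1:ℝ) 0)), x ≠ (0:ℝ) := ae_restrict_of_ae hne
    have h2 : ∀ᵐ x ∂(volume.restrict (Set.uIoc (-1:ℝ) 0)), x ∈ Set.uIoc (-1:ℝ) 0 :=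
      ae_restrict_mem measurableSet_uIoc
    filter_upwards [h1, h2] with x hx hmem
    rw [Set.uIoc_of_le (by norm_num : (-1:ℝ) ≤ 0)] at hmem
    have hlt : x < 0 := lt_of_le_of_ne hmem.2 hx
    rw [hgtneg x hlt]; rfl
  have keyR : ∀ F : ℝ → ℝ, Continuous F →
      IntervalIntegrable (fun x => F x * gt x) volume 0 1 := by
    intro F hF
    refine ((hF.mul hg).intervalIntegrable _ _).congr_ae ?_
    have h2 : ∀ᵐ x ∂(volume.restrict (Set.uIoc (0:ℝ) 1)), x ∈ Set.uIoc (0:ℝ) 1 :=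
      ae_restrict_mem measurableSet_uIoc
    filter_upwards [h2] with x hmem
    rw [Set.uIoc_of_le (by norm_num : (0:ℝ) ≤ 1)] at hmem
    rw [hgtpos x hmem.1.le]; rfl
  -- on [0,1] integrals of F * gt equal integrals of F * g (a.e. congr)
  have intR : ∀ F : ℝ → ℝ, (∫ x in (0:ℝ)..1, F x * gt x) = ∫ x in (0:ℝ)..1, F x * g x := by
    intro F
    refine intervalIntegral.integral_congr_ae ?_
    filter_upwards [] with x hx
    rw [Set.uIoc_of_le (by norm_num : (0:ℝ) ≤ 1)] at hx
    rw [hgtpos x hx.1.le]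
  -- reflected: for x ∈ Ι 0 1, gt (-x) = -g x
  have intRef : ∀ F : ℝ → ℝ, (∫ x in (0:ℝ)..1, F x * gt (-x)) = ∫ x in (0:ℝ)..1, F x * (-g x) := by
    intro F
    refine intervalIntegral.integral_congr_ae ?_
    filter_upwards [] with x hx
    rw [Set.uIoc_of_le (by norm_num : (0:ℝ) ≤ 1)] at hx
    rw [hgtneg (-x) (by linarith [hx.1]), neg_neg]
  -- coefficient computation
  have hc : ∀ n : ℤ, ((1/2 : ℂ) * ∫ x in (-1:ℝ)..1,
      Complex.exp (2 * Real.pi * Complex.I * (-n) * x / 2) * G x)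
      = -(((b n : ℝ) : ℂ) * Complex.I) := by
    intro n
    have hpt : ∀ x : ℝ, Complex.exp (2 * Real.pi * Complex.I * (-n) * x / 2) * G x
        = ((Real.cos ((n:ℝ) * Real.pi * x) * gt x : ℝ) : ℂ)
          - ((Real.sin ((n:ℝ) * Real.pi * x) * gt x : ℝ) : ℂ) * Complex.I := by
      intro x
      have harg : 2 * (Real.pi:ℂ) * Complex.I * (-(n:ℂ)) * x / 2
          = ((-((n:ℝ) * Real.pi * x) : ℝ) : ℂ) * Complex.I := by
        push_cast; ring
      rw [hG]
      push_cast
      rw [harg, Complex.exp_mul_I, ← Complex.ofReal_cos, ← Complex.ofReal_sin,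
        Real.cos_neg, Real.sin_neg]
      push_cast
      ring
    rw [intervalIntegral.integral_congr (fun x _ => hpt x)]
    have hcos : Continuous fun x : ℝ => Real.cos ((n:ℝ) * Real.pi * x) :=
      Real.continuous_cos.comp (by continuity)
    have hsin : Continuous fun x : ℝ => Real.sin ((n:ℝ) * Real.pi * x) :=
      Real.continuous_sin.comp (by continuity)
    have i1 : IntervalIntegrable (fun x => ((Real.cos ((n:ℝ) * Real.pi * x) * gt x : ℝ) : ℂ))
        volume (-1) 1 := by
      have h := (keyL _ hcos).trans (keyR _ hcos)
      rw [intervalIntegrable_iff] at h ⊢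
      exact h.ofReal
    have i2 : IntervalIntegrable (fun x => ((Real.sin ((n:ℝ) * Real.pi * x) * gt x : ℝ) : ℂ)
        * Complex.I) volume (-1) 1 := by
      have h := (keyL _ hsin).trans (keyR _ hsin)
      rw [intervalIntegrable_iff] at h ⊢
      exact (h.ofReal (𝕜 := ℂ)).mul_const _
    rw [intervalIntegral.integral_sub i1 i2, intervalIntegral.integral_mul_const,
      intervalIntegral.integral_ofReal, intervalIntegral.integral_ofReal]
    have hA : (∫ x in (-1:ℝ)..1, Real.cos ((n:ℝ) * Real.pi * x) * gt x) = 0 := by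
      rw [int_split (keyL _ hcos) (keyR _ hcos)]
      have e1 := intR (fun x => Real.cos ((n:ℝ) * Real.pi * x))
      have e2 : (∫ x in (0:ℝ)..1, Real.cos ((n:ℝ) * Real.pi * (-x)) * gt (-x))
          = ∫ x in (0:ℝ)..1, -(Real.cos ((n:ℝ) * Real.pi * x) * g x) := by
        have h1 : (∫ x in (0:ℝ)..1, Real.cos ((n:ℝ) * Real.pi * (-x)) * gt (-x))
            = ∫ x in (0:ℝ)..1, Real.cos ((n:ℝ) * Real.pi * x) * gt (-x) :=
          intervalIntegral.integral_congr fun x _ => by rw [mul_neg, Real.cos_neg]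
        rw [h1, intRef (fun x => Real.cos ((n:ℝ) * Real.pi * x))]
        exact intervalIntegral.integral_congr fun x _ => by ring
      rw [e1, e2, intervalIntegral.integral_neg]
      ring
    have hB : (∫ x in (-1:ℝ)..1, Real.sin ((n:ℝ) * Real.pi * x) * gt x) = 2 * b n := by
      rw [int_split (keyL _ hsin) (keyR _ hsin)]
      have e1 := intR (fun x => Real.sin ((n:ℝ) * Real.pi * x))
      have e2 : (∫ x in (0:ℝ)..1, Real.sin ((n:ℝ) * Real.pi * (-x)) * gt (-x))
          = ∫ x in (0:ℝ)..1, Real.sin ((n:ℝ) * Real.pi * x) * g x := by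
        have h1 : (∫ x in (0:ℝ)..1, Real.sin ((n:ℝ) * Real.pi * (-x)) * gt (-x))
            = ∫ x in (0:ℝ)..1, (-Real.sin ((n:ℝ) * Real.pi * x)) * gt (-x) :=
          intervalIntegral.integral_congr fun x _ => by rw [mul_neg, Real.sin_neg, neg_mul]
        rw [h1, intRef (fun x => -Real.sin ((n:ℝ) * Real.pi * x))]
        exact intervalIntegral.integral_congr fun x _ => by ring
      have e3 : (∫ x in (0:ℝ)..1, Real.sin ((n:ℝ) * Real.pi * x) * g x) = b n := by
        rw [hb]
        exact intervalIntegral.integral_congr fun x _ => mul_comm _ _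
      rw [e1, e2, e3]
      ring
    rw [hA, hB]
    push_cast
    ring
  -- L² norm of G
  have hnorm : (∫ x in (-1:ℝ)..1, ‖G x‖^2) = 2 * ∫ x in (0:ℝ)..1, (g x)^2 := by
    have e1 : ∀ x : ℝ, ‖G x‖^2 = (g |x|)^2 := by
      intro x
      rw [hG, Complex.norm_real]
      rcases lt_or_ge x 0 with h | h
      · rw [hgtneg x h, abs_of_neg h]
        simp [neg_sq, sq_abs]
      · rw [hgtpos x h, _root_.abs_of_nonneg h]
        simp [sq_abs]
    rw [intervalIntegral.integral_congr (fun x _ => e1 x)]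
    have hgabs : Continuous fun x : ℝ => g |x| := hg.comp continuous_abs
    have c1 : IntervalIntegrable (fun x => (g |x|)^2) volume (-1) 0 :=
      (hgabs.pow 2).intervalIntegrable _ _
    have c2 : IntervalIntegrable (fun x => (g |x|)^2) volume 0 1 :=
      (hgabs.pow 2).intervalIntegrable _ _
    rw [int_split c1 c2]
    simp only [abs_neg]
    have : (∫ x in (0:ℝ)..1, (g |x|)^2) = ∫ x in (0:ℝ)..1, (g x)^2 := by
      refine intervalIntegral.integral_congr fun x hx => ?_
      rw [Set.uIcc_of_le (by norm_num : (0:ℝ) ≤ 1)] at hx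
      rw [_root_.abs_of_nonneg hx.1]
    rw [this]
    ring
  -- massage hcore
  have hcore' : HasSum (fun n : ℤ => (b n)^2) (∫ x in (0:ℝ)..1, (g x)^2) := by
    have h1 : ∀ n : ℤ, ‖(1/2 : ℂ) * ∫ x in (-1:ℝ)..1,
        Complex.exp (2 * Real.pi * Complex.I * (-n) * x / 2) * G x‖^2 = (b n)^2 := by
      intro n
      rw [hc n]
      rw [norm_neg, norm_mul, Complex.norm_I, mul_one, Complex.norm_real]
      simp [sq_abs]
    have h2 : (1/2 : ℝ) * (∫ x in (-1:ℝ)..1, ‖G x‖^2) = ∫ x in (0:ℝ)..1, (g x)^2 := by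
      rw [hnorm]; ring
    rw [← h2]
    exact hcore.congr_fun fun n => (h1 n).symm
  have hzero : b 0 = 0 := by
    rw [hb]
    simp
  have hsymm : ∀ n : ℤ, (b (-n))^2 = (b n)^2 := by
    intro n
    have : b (-n) = -b n := by
      rw [hb]
      simp only [Int.cast_neg, neg_mul, Real.sin_neg, mul_neg]
      rw [intervalIntegral.integral_neg]
    rw [this]
    ring
  have hfin := tsum_int_symm hcore' (by rw [hzero]; norm_num) hsymm
  rw [hfin]
  congr 1
  refine tsum_congr fun n => ?_
  rw [hb]
  congr 1
  refine intervalIntegral.integral_congr fun x hx => ?_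
  push_cast
  ring_nf

lemma ipp (α : ℕ) (f : ℝ → ℝ) (hf : ContDiff ℝ (α : ℕ∞) f)
    (hbdry : ∀ l : ℕ, Odd l → l < α →
      iteratedDeriv l f 0 = 0 ∧ iteratedDeriv l f 1 = 0)
    (k : ℕ) (hk : 1 ≤ k) :
    ∀ l : ℕ, l ≤ α →
      (∫ x in (0:ℝ)..1, iteratedDeriv l f x *
          (if Even l then Real.cos ((k:ℝ) * Real.pi * x) else Real.sin ((k:ℝ) * Real.pi * x)))^2
        = ((k:ℝ) * Real.pi)^(2*l) * (∫ x in (0:ℝ)..1, f x * Real.cos ((k:ℝ) * Real.pi * x))^2 := by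
  have hkpi : (k:ℝ) * Real.pi ≠ 0 := by
    have h1 : (0:ℝ) < k := by exact_mod_cast hk
    positivity
  intro l
  induction l with
  | zero =>
    intro _
    simp [iteratedDeriv_zero]
  | succ l ih =>
    intro hl1
    have hlα : l < α := Nat.lt_of_succ_le hl1
    have hIH := ih (le_of_lt hlα)
    have hdiff : Differentiable ℝ (iteratedDeriv l f) :=
      hf.differentiable_iteratedDeriv l (by exact_mod_cast hlα)
    have hd : ∀ x : ℝ, HasDerivAt (iteratedDeriv l f) (iteratedDeriv (l+1) f x) x := by
      intro x
      rw [iteratedDeriv_succ]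
      exact (hdiff x).hasDerivAt
    have hcont1 : Continuous (iteratedDeriv (l+1) f) :=
      hf.continuous_iteratedDeriv (l+1) (by exact_mod_cast hl1)
    have hcos : Continuous fun x : ℝ => Real.cos ((k:ℝ) * Real.pi * x) :=
      Real.continuous_cos.comp (by continuity)
    have hsin : Continuous fun x : ℝ => Real.sin ((k:ℝ) * Real.pi * x) :=
      Real.continuous_sin.comp (by continuity)
    have hlin : ∀ x : ℝ, HasDerivAt (fun y : ℝ => (k:ℝ) * Real.pi * y) ((k:ℝ) * Real.pi) x := by
      intro x
      simpa using (hasDerivAt_id x).const_mul ((k:ℝ) * Real.pi)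
    have hsin0 : Real.sin ((k:ℝ) * Real.pi * 0) = 0 := by simp
    have hsin1 : Real.sin ((k:ℝ) * Real.pi * 1) = 0 := by
      rw [mul_one]
      exact Real.sin_nat_mul_pi k
    have harith : 2 * (l + 1) = 2 * l + 2 := by ring
    rcases Nat.even_or_odd l with he | ho
    · -- l even
      have hv : ∀ x : ℝ, HasDerivAt
          (fun y : ℝ => (1/((k:ℝ) * Real.pi)) * Real.sin ((k:ℝ) * Real.pi * y))
          (Real.cos ((k:ℝ) * Real.pi * x)) x := by
        intro x
        have h1 := ((Real.hasDerivAt_sin (((k:ℝ) * Real.pi * x))).comp x (hlin x)).const_mul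
          (1/((k:ℝ) * Real.pi))
        refine h1.congr_deriv ?_
        field_simp
      have hibp := intervalIntegral.integral_mul_deriv_eq_deriv_mul (a := (0:ℝ)) (b := (1:ℝ))
        (u := iteratedDeriv l f) (u' := iteratedDeriv (l+1) f)
        (v := fun y : ℝ => (1/((k:ℝ) * Real.pi)) * Real.sin ((k:ℝ) * Real.pi * y))
        (v' := fun x : ℝ => Real.cos ((k:ℝ) * Real.pi * x))
        (fun x _ => hd x) (fun x _ => hv x)
        (hcont1.intervalIntegrable _ _) (hcos.intervalIntegrable _ _)
      simp only [hsin0, hsin1, Real.sin_zero, mul_zero, zero_mul, sub_zero, zero_sub,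
        neg_zero] at hibp
      have hpull : (∫ x in (0:ℝ)..1, iteratedDeriv (l+1) f x *
          ((1/((k:ℝ) * Real.pi)) * Real.sin ((k:ℝ) * Real.pi * x)))
          = (1/((k:ℝ) * Real.pi)) * ∫ x in (0:ℝ)..1,
              iteratedDeriv (l+1) f x * Real.sin ((k:ℝ) * Real.pi * x) := by
        rw [← intervalIntegral.integral_const_mul]
        exact intervalIntegral.integral_congr fun x _ => by ring
      rw [hpull] at hibp
      -- hibp : ∫ f^l cos = -( (1/(kπ)) * ∫ f^(l+1) sin )
      have hnotE : ¬ Even (l+1) := by simp [Nat.even_add_one, he]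
      simp only [if_pos he] at hIH
      simp only [if_neg hnotE]
      have hres : (∫ x in (0:ℝ)..1, iteratedDeriv (l+1) f x * Real.sin ((k:ℝ) * Real.pi * x))
          = -(((k:ℝ) * Real.pi) *
              ∫ x in (0:ℝ)..1, iteratedDeriv l f x * Real.cos ((k:ℝ) * Real.pi * x)) := by
        rw [hibp]
        field_simp
      rw [hres]
      have e1 : (-(((k:ℝ) * Real.pi) *
          ∫ x in (0:ℝ)..1, iteratedDeriv l f x * Real.cos ((k:ℝ) * Real.pi * x)))^2
          = ((k:ℝ) * Real.pi)^2 *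
            (∫ x in (0:ℝ)..1, iteratedDeriv l f x * Real.cos ((k:ℝ) * Real.pi * x))^2 := by
        ring
      rw [e1, hIH, harith, pow_add]
      ring
    · -- l odd
      obtain ⟨hb0, hb1⟩ := hbdry l ho hlα
      have hv : ∀ x : ℝ, HasDerivAt
          (fun y : ℝ => -(1/((k:ℝ) * Real.pi)) * Real.cos ((k:ℝ) * Real.pi * y))
          (Real.sin ((k:ℝ) * Real.pi * x)) x := by
        intro x
        have h1 := ((Real.hasDerivAt_cos (((k:ℝ) * Real.pi * x))).comp x (hlin x)).const_mul
          (-(1/((k:ℝ) * Real.pi)))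
        refine h1.congr_deriv ?_
        field_simp
      have hibp := intervalIntegral.integral_mul_deriv_eq_deriv_mul (a := (0:ℝ)) (b := (1:ℝ))
        (u := iteratedDeriv l f) (u' := iteratedDeriv (l+1) f)
        (v := fun y : ℝ => -(1/((k:ℝ) * Real.pi)) * Real.cos ((k:ℝ) * Real.pi * y))
        (v' := fun x : ℝ => Real.sin ((k:ℝ) * Real.pi * x))
        (fun x _ => hd x) (fun x _ => hv x)
        (hcont1.intervalIntegrable _ _) (hsin.intervalIntegrable _ _)
      simp only [hb0, hb1, zero_mul, mul_zero, sub_zero, zero_sub, neg_zero] at hibp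
      have hpull : (∫ x in (0:ℝ)..1, iteratedDeriv (l+1) f x *
          (-(1/((k:ℝ) * Real.pi)) * Real.cos ((k:ℝ) * Real.pi * x)))
          = -(1/((k:ℝ) * Real.pi)) * ∫ x in (0:ℝ)..1,
              iteratedDeriv (l+1) f x * Real.cos ((k:ℝ) * Real.pi * x) := by
        rw [← intervalIntegral.integral_const_mul]
        exact intervalIntegral.integral_congr fun x _ => by ring
      rw [hpull] at hibp
      have hnE : ¬ Even l := Nat.not_even_iff_odd.mpr ho
      have hE1 : Even (l+1) := Nat.even_add_one.mpr hnE
      simp only [if_neg hnE] at hIH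
      simp only [if_pos hE1]
      have hres : (∫ x in (0:ℝ)..1, iteratedDeriv (l+1) f x * Real.cos ((k:ℝ) * Real.pi * x))
          = ((k:ℝ) * Real.pi) *
              ∫ x in (0:ℝ)..1, iteratedDeriv l f x * Real.sin ((k:ℝ) * Real.pi * x) := by
        rw [hibp]
        field_simp
      rw [hres]
      have e1 : (((k:ℝ) * Real.pi) *
          ∫ x in (0:ℝ)..1, iteratedDeriv l f x * Real.sin ((k:ℝ) * Real.pi * x))^2
          = ((k:ℝ) * Real.pi)^2 *
            (∫ x in (0:ℝ)..1, iteratedDeriv l f x * Real.sin ((k:ℝ) * Real.pi * x))^2 := by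
        ring
      rw [e1, hIH, harith, pow_add]
      ring

/-- Parseval-type identity for the cosine series coefficients of a smooth
function with vanishing odd derivatives at the boundary, and the resulting
characterization of the Sobolev s-ellipsoid. -/
theorem parseval_sobolev_s_ellipsoid (α : ℕ) (hα : 1 ≤ α) (f : ℝ → ℝ)
    (hf : ContDiff ℝ (α : ℕ∞) f)
    (hbdry : ∀ l : ℕ, Odd l → l < α →
      iteratedDeriv l f 0 = 0 ∧ iteratedDeriv l f 1 = 0)
    (θ : ℕ → ℝ)
    (hθ : ∀ k : ℕ, 1 ≤ k →
      θ k = ∫ x in (0:ℝ)..1, f x * Real.cos (k * Real.pi * x)) :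
    (∫ x in (0:ℝ)..1, (iteratedDeriv α f x) ^ 2)
        = 2 * Real.pi ^ (2 * α) *
          ∑' k : ℕ, ((k : ℝ) + 1) ^ (2 * α) * (θ (k + 1)) ^ 2
      ∧ ∀ C : ℝ, 0 < C →
        ((∫ x in (0:ℝ)..1, (iteratedDeriv α f x) ^ 2) ≤ 2 * Real.pi ^ (2 * α) * C
          ↔ ∑' k : ℕ, ((k : ℝ) + 1) ^ (2 * α) * (θ (k + 1)) ^ 2 ≤ C) := by
  have hg : Continuous (iteratedDeriv α f) := hf.continuous_iteratedDeriv α le_rfl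
  -- the key per-coefficient identity
  have hterm : ∀ n : ℕ,
      (∫ x in (0:ℝ)..1, iteratedDeriv α f x *
        (if Even α then Real.cos (((n:ℝ)+1) * Real.pi * x) else Real.sin (((n:ℝ)+1) * Real.pi * x)))^2
      = (((n:ℝ)+1) * Real.pi)^(2*α) * (θ (n+1))^2 := by
    intro n
    have hcast : ((n+1:ℕ):ℝ) = (n:ℝ)+1 := by push_cast; ring
    have h1 := ipp α f hf hbdry (n+1) (by omega) α le_rfl
    rw [hcast] at h1
    rw [h1, hθ (n+1) (by omega), hcast]
  -- main identity
  have hmain : (∫ x in (0:ℝ)..1, (iteratedDeriv α f x) ^ 2)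
      = 2 * Real.pi ^ (2 * α) *
        ∑' k : ℕ, ((k : ℝ) + 1) ^ (2 * α) * (θ (k + 1)) ^ 2 := by
    have hswap : ∀ n : ℕ, (((n:ℝ)+1) * Real.pi)^(2*α) * (θ (n+1))^2
        = Real.pi ^ (2*α) * (((n:ℝ)+1)^(2*α) * (θ (n+1))^2) := by
      intro n; rw [mul_pow]; ring
    rcases Nat.even_or_odd α with he | ho
    · have h0 : (∫ x in (0:ℝ)..1, iteratedDeriv α f x) = 0 := by
        obtain ⟨m, hm⟩ : ∃ m, α = m + 1 := ⟨α - 1, by omega⟩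
        have hom : Odd m := by
          rw [hm, Nat.even_add_one] at he
          exact Nat.not_even_iff_odd.mp he
        obtain ⟨hb0, hb1⟩ := hbdry m hom (by omega)
        have hdiff : Differentiable ℝ (iteratedDeriv m f) :=
          hf.differentiable_iteratedDeriv m (by exact_mod_cast (by omega : m < α))
        have hd : ∀ x ∈ Set.uIcc (0:ℝ) 1, HasDerivAt (iteratedDeriv m f)
            (iteratedDeriv (m+1) f x) x := by
          intro x _
          rw [iteratedDeriv_succ]
          exact (hdiff x).hasDerivAt
        have := intervalIntegral.integral_eq_sub_of_hasDerivAt hd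
          ((hf.continuous_iteratedDeriv (m+1) (by exact_mod_cast hm.ge)).intervalIntegrable _ _)
        rw [hm]
        rw [this, hb1, hb0, sub_zero]
      have hp := parseval_cos (iteratedDeriv α f) hg h0
      rw [hp]
      have : ∀ n : ℕ, (∫ x in (0:ℝ)..1, iteratedDeriv α f x * Real.cos (((n:ℝ)+1) * Real.pi * x))^2
          = Real.pi ^ (2*α) * (((n:ℝ)+1)^(2*α) * (θ (n+1))^2) := by
        intro n
        have h2 := hterm n
        simp only [if_pos he] at h2
        rw [h2, hswap n]
      rw [tsum_congr this, tsum_mul_left]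
      ring
    · have hp := parseval_sin (iteratedDeriv α f) hg
      rw [hp]
      have hne : ¬ Even α := Nat.not_even_iff_odd.mpr ho
      have : ∀ n : ℕ, (∫ x in (0:ℝ)..1, iteratedDeriv α f x * Real.sin (((n:ℝ)+1) * Real.pi * x))^2
          = Real.pi ^ (2*α) * (((n:ℝ)+1)^(2*α) * (θ (n+1))^2) := by
        intro n
        have h2 := hterm n
        simp only [if_neg hne] at h2
        rw [h2, hswap n]
      rw [tsum_congr this, tsum_mul_left]
      ring
  refine ⟨hmain, ?_⟩
  intro C hC
  rw [hmain]
  have hpos : (0:ℝ) < 2 * Real.pi ^ (2 * α) := by positivity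
  constructor
  · intro h
    exact le_of_mul_le_mul_left h hpos
  · intro h
    exact mul_le_mul_of_nonneg_left h hpos.le
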